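/- Theorem (properties of the hypothesis): given an observation table O = (S, S₊, R, E, f, N) and an assignment of reset variables b_ω and location variables q_ω ∈ {1,…,N} satisfying constraints C₁ ∧ C₂ ∧ C₃ ∧ C₄, the constructed hypothesis H satisfies: (1) H is deterministic; (2) for each row ω ∈ S ∪ S₊ ∪ R, the location reached by ω in H equals q_ω; (3) H accepts ω iff MQ(ω) = +; (4) if f evaluated on rows ω₁, ω₂ under the assigned resets is ⊥, then ω₁ and ω₂ reach distinct locations in H. -/
import Mathlib


/-- A run of a one-clock timed automaton with transition relation `Δ`
(`(q, σ, guard, reset, q') ∈ Δ`) from a state `(q, ν)` over a timed word,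
recording the trace of (reset bit, location, clock value) after each step. -/
inductive Run {Q A : Type} (Δ : Set (Q × A × Set ℝ × Bool × Q)) :
    (Q × ℝ) → List (A × ℝ) → List (Bool × Q × ℝ) → Prop
  | nil (s : Q × ℝ) : Run Δ s [] []
  | cons {q : Q} {v : ℝ} {a : A} {t : ℝ} {φ : Set ℝ} {b : Bool} {q' : Q}
      {ω : List (A × ℝ)} {tr : List (Bool × Q × ℝ)} :
      (q, a, φ, b, q') ∈ Δ → 0 ≤ t → v + t ∈ φ →
      Run Δ (q', if b then 0 else v + t) ω tr →
      Run Δ (q, v) ((a, t) :: ω) ((b, q', if b then 0 else v + t) :: tr)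

/-- The state reached at the end of a run with trace `tr` starting from `s`. -/
def endState {Q : Type} (s : Q × ℝ) (tr : List (Bool × Q × ℝ)) : Q × ℝ :=
  match tr.getLast? with
  | some (_, q, v) => (q, v)
  | none => s

/-- The alignment construction: `align1 ν₁ ν₂ e` is the suffix attached to the
word with clock value `ν₁`, obtained from `e` by adding `ν₂ - ν₁` to the first
delay when `ν₁ < ν₂`, and leaving `e` unchanged otherwise. -/
noncomputable def align1 {A : Type} (ν₁ ν₂ : ℝ) : List (A × ℝ) → List (A × ℝ)
  | [] => []
  | (a, t) :: rest =>
      if ν₁ < ν₂ then (a, t + (ν₂ - ν₁)) :: rest else (a, t) :: rest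

/-- A timed word is accepted iff its run from the initial state ends in an
accepting location. -/
def Accepted {Q A : Type} (Δ : Set (Q × A × Set ℝ × Bool × Q)) (q0 : Q)
    (acc : Set Q) (ω : List (A × ℝ)) : Prop :=
  ∃ tr, Run Δ (q0, 0) ω tr ∧ (endState (q0, 0) tr).1 ∈ acc

/-- `clockVal ω k` : clock value after `ω` if the last reset is at position `k`. -/
def clockVal {A : Type} (ω : List (A × ℝ)) (k : ℕ) : ℝ :=
  ((ω.drop k).map (·.2)).sum

/-- The regions with maximum constant `κ`, and same-region relation. -/
def Regions (κ : ℕ) : Set (Set ℝ) :=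
  {r | (∃ n : ℕ, n ≤ κ ∧ r = Set.Icc (n : ℝ) n) ∨
       (∃ n : ℕ, n < κ ∧ r = Set.Ioo (n : ℝ) ((n : ℝ) + 1)) ∨
       r = Set.Ioi (κ : ℝ)}

def SameRegion (κ : ℕ) (x y : ℝ) : Prop :=
  ∃ r ∈ Regions κ, x ∈ r ∧ y ∈ r

/-- The last reset of row `ω` determined by the ending-reset variables `bvar`. -/
def lastResetAssign {A : Type} (bvar : List (A × ℝ) → Bool)
    (ω : List (A × ℝ)) (k : ℕ) : Prop :=
  k ≤ ω.length ∧ bvar (ω.take k) = true ∧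
    ∀ j, k < j → j ≤ ω.length → bvar (ω.take j) = false

/-- The table function `f`: rows `ω₁, ω₂` are (currently) indistinguishable
under last resets `i, j` iff all aligned membership tests on suffixes in `E`
agree. -/
def rowsEquiv {A : Type} (MQ : List (A × ℝ) → Bool) (E : Finset (List (A × ℝ)))
    (ω₁ ω₂ : List (A × ℝ)) (i j : ℕ) : Prop :=
  ∀ e ∈ E, MQ (ω₁ ++ align1 (clockVal ω₁ i) (clockVal ω₂ j) e)
         = MQ (ω₂ ++ align1 (clockVal ω₂ j) (clockVal ω₁ i) e)

theorem endState_nil {Q : Type} (s : Q × ℝ) : endState s [] = s := rfl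

theorem endState_concat {Q : Type} (s : Q × ℝ) (tr : List (Bool × Q × ℝ))
    (b : Bool) (q : Q) (v : ℝ) : endState s (tr ++ [(b, q, v)]) = (q, v) := by
  simp [endState, List.getLast?_concat]

theorem endState_cons {Q : Type} (s : Q × ℝ) (x : Bool × Q × ℝ)
    (tr : List (Bool × Q × ℝ)) : endState s (x :: tr) = endState (x.2.1, x.2.2) tr := by
  cases tr with
  | nil => rfl
  | cons y tr' =>
      cases h : (y :: tr').getLast? with
      | none => simp at h
      | some p => simp [endState, List.getLast?_cons_cons, h]

theorem Run.snoc {Q A : Type} {Δ : Set (Q × A × Set ℝ × Bool × Q)} {s : Q × ℝ}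
    {ω : List (A × ℝ)} {tr : List (Bool × Q × ℝ)} (h : Run Δ s ω tr)
    {a : A} {t : ℝ} {φ : Set ℝ} {b : Bool} {q' : Q}
    (hmem : ((endState s tr).1, a, φ, b, q') ∈ Δ)
    (ht : 0 ≤ t) (hφ : (endState s tr).2 + t ∈ φ) :
    Run Δ s (ω ++ [(a, t)])
      (tr ++ [(b, q', if b then 0 else (endState s tr).2 + t)]) := by
  induction h with
  | nil s =>
      rw [endState_nil] at hmem hφ ⊢
      exact Run.cons hmem ht hφ (Run.nil _)
  | @cons q v a0 t0 φ0 b0 q0 ω0 tr0 h1 h2 h3 h4 ih =>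
      rw [endState_cons] at hmem hφ ⊢
      exact Run.cons h1 h2 h3 (ih hmem hφ)

theorem run_concat_inv {Q A : Type} {Δ : Set (Q × A × Set ℝ × Bool × Q)} :
    ∀ {ω : List (A × ℝ)} {s : Q × ℝ} {tr : List (Bool × Q × ℝ)} {a : A} {t : ℝ},
    Run Δ s (ω ++ [(a, t)]) tr →
    ∃ tr₀ φ b q', tr = tr₀ ++ [(b, q', if b then 0 else (endState s tr₀).2 + t)] ∧
      Run Δ s ω tr₀ ∧ ((endState s tr₀).1, a, φ, b, q') ∈ Δ ∧ 0 ≤ t ∧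
      (endState s tr₀).2 + t ∈ φ := by
  intro ω
  induction ω with
  | nil =>
      intro s tr a t h
      cases h with
      | cons h1 h2 h3 h4 =>
          cases h4 with
          | nil =>
              exact ⟨[], _, _, _, rfl, Run.nil _, h1, h2, h3⟩
  | cons x ω' ih =>
      intro s tr a t h
      cases h with
      | cons h1 h2 h3 h4 =>
          obtain ⟨tr₀, φ, b, q', htr, hrun, hmem, ht, hφ⟩ := ih h4
          refine ⟨_ :: tr₀, φ, b, q', ?_, Run.cons h1 h2 h3 hrun, ?_, ht, ?_⟩
          · rw [htr, endState_cons]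
            rfl
          · rwa [endState_cons]
          · rwa [endState_cons]

/-- Properties of the hypothesis automaton: given an observation table
`(S, S₊, R, E, f, N)` and an assignment of ending-reset variables `bvar` and
location variables `qvar` satisfying the constraints C₁–C₄, there is a
hypothesis DOTA `H` (with locations `0, …, N-1`, initial location `qvar ε`,
transitions `Δ` and accepting locations `acc`) such that: (1) `H` is
deterministic; (2) every row `ω` reaches location `qvar ω` in `H`; (3) `H`
accepts a row `ω` iff `MQ ω = +`; and (4) rows distinguished by `f` under the
assigned resets reach distinct locations of `H`. -/
theorem hypothesis_properties {A : Type} [DecidableEq A]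
    (MQ : List (A × ℝ) → Bool)
    (S Splus R E : Finset (List (A × ℝ)))
    (N κ : ℕ)
    (hd1 : Disjoint S Splus) (hd2 : Disjoint S R) (hd3 : Disjoint Splus R)
    (hεS : [] ∈ S) (hεE : [] ∈ E)
    (hpos : ∀ ω ∈ S ∪ Splus ∪ R, ∀ p ∈ ω, 0 ≤ p.2)
    (hEpos : ∀ e ∈ E, ∀ p ∈ e, 0 ≤ p.2)
    (hpc : ∀ ω ∈ S ∪ Splus ∪ R, ∀ k, ω.take k ∈ S ∪ Splus ∪ R)
    (hext : ∀ ω ∈ S ∪ Splus, ∀ σ : A, ω ++ [(σ, 0)] ∈ S ∪ Splus ∪ R)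
    (bvar : List (A × ℝ) → Bool) (qvar : List (A × ℝ) → ℕ)
    (hbε : bvar [] = true)
    -- C₁ : distinguished rows get distinct locations
    (hC1 : ∀ ω₁ ∈ S ∪ Splus ∪ R, ∀ ω₂ ∈ S ∪ Splus ∪ R, ∀ i j,
      lastResetAssign bvar ω₁ i → lastResetAssign bvar ω₂ j →
      ¬ rowsEquiv MQ E ω₁ ω₂ i j → qvar ω₁ ≠ qvar ω₂)
    -- C₂ : consistency
    (hC2 : ∀ ω₁ ∈ S ∪ Splus ∪ R, ∀ ω₂ ∈ S ∪ Splus ∪ R, ∀ (σ : A) (t₁ t₂ : ℝ),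
      ω₁ ++ [(σ, t₁)] ∈ S ∪ Splus ∪ R → ω₂ ++ [(σ, t₂)] ∈ S ∪ Splus ∪ R →
      ∀ i j, lastResetAssign bvar ω₁ i → lastResetAssign bvar ω₂ j →
      rowsEquiv MQ E ω₁ ω₂ i j →
      SameRegion κ (clockVal ω₁ i + t₁) (clockVal ω₂ j + t₂) →
      qvar ω₁ = qvar ω₂ →
      bvar (ω₁ ++ [(σ, t₁)]) = bvar (ω₂ ++ [(σ, t₂)]) ∧
        qvar (ω₁ ++ [(σ, t₁)]) = qvar (ω₂ ++ [(σ, t₂)]))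
    -- C₃ : closedness and location bounds
    (hC3 : (∀ k < N, ∃ ω ∈ S ∪ Splus, qvar ω = k) ∧
      ∀ ω ∈ S ∪ Splus ∪ R, qvar ω < N)
    -- C₄ : rows of S get pairwise distinct locations
    (hC4 : ∀ ω₁ ∈ S, ∀ ω₂ ∈ S, qvar ω₁ = qvar ω₂ → ω₁ = ω₂) :
    ∃ (Δ : Set (ℕ × A × Set ℝ × Bool × ℕ)) (acc : Set ℕ),
      -- (1) the hypothesis is deterministic
      (∀ q a φ b q' φ' b' q'',
        (q, a, φ, b, q') ∈ Δ → (q, a, φ', b', q'') ∈ Δ →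
        (φ, b, q') ≠ (φ', b', q'') → φ ∩ φ' ∩ Set.Ici (0 : ℝ) = ∅) ∧
      (∀ q a φ b q', (q, a, φ, b, q') ∈ Δ → q < N ∧ q' < N) ∧
      -- (2) each row reaches its assigned location
      (∀ ω ∈ S ∪ Splus ∪ R, ∃ tr, Run Δ (qvar [], 0) ω tr ∧
        (endState (qvar [], 0) tr).1 = qvar ω) ∧
      -- (3) acceptance agrees with membership queries on rows
      (∀ ω ∈ S ∪ Splus ∪ R, (Accepted Δ (qvar []) acc ω ↔ MQ ω = true)) ∧
      -- (4) rows distinguished by `f` reach distinct locations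
      (∀ ω₁ ∈ S ∪ Splus ∪ R, ∀ ω₂ ∈ S ∪ Splus ∪ R, ∀ i j,
        lastResetAssign bvar ω₁ i → lastResetAssign bvar ω₂ j →
        ¬ rowsEquiv MQ E ω₁ ω₂ i j →
        ∀ tr₁ tr₂, Run Δ (qvar [], 0) ω₁ tr₁ → Run Δ (qvar [], 0) ω₂ tr₂ →
          (endState (qvar [], 0) tr₁).1 ≠ (endState (qvar [], 0) tr₂).1) := by
  classical
  set T : Finset (List (A × ℝ)) := S ∪ Splus ∪ R with hT
  -- existence of a last reset for every word
  have lr_ex : ∀ ω : List (A × ℝ), ∃ k, lastResetAssign bvar ω k := by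
    intro ω
    have h0 : 0 ∈ (Finset.range (ω.length + 1)).filter (fun k => bvar (ω.take k) = true) := by
      simp [hbε]
    set F := (Finset.range (ω.length + 1)).filter (fun k => bvar (ω.take k) = true) with hF
    refine ⟨F.max' ⟨0, h0⟩, ?_, ?_, ?_⟩
    · have := F.max'_mem ⟨0, h0⟩
      simp only [hF, Finset.mem_filter, Finset.mem_range, Nat.lt_succ_iff] at this
      exact this.1
    · have := F.max'_mem ⟨0, h0⟩
      simp only [hF, Finset.mem_filter] at this
      exact this.2
    · intro j hj hj2
      cases hbv : bvar (ω.take j) with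
      | false => rfl
      | true =>
          have hjF : j ∈ F := by
            simp only [hF, Finset.mem_filter, Finset.mem_range, Nat.lt_succ_iff]
            exact ⟨hj2, hbv⟩
          have := F.le_max' j hjF
          omega
  -- uniqueness of the last reset
  have lr_uniq : ∀ (ω : List (A × ℝ)) (k₁ k₂ : ℕ), lastResetAssign bvar ω k₁ →
      lastResetAssign bvar ω k₂ → k₁ = k₂ := by
    intro ω k₁ k₂ h₁ h₂
    rcases lt_trichotomy k₁ k₂ with h | h | h
    · have := h₁.2.2 k₂ h h₂.1
      simp [h₂.2.1] at this
    · exact h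
    · have := h₂.2.2 k₁ h h₁.1
      simp [h₁.2.1] at this
  -- clock values of rows are nonnegative
  have clock_nonneg : ∀ ω ∈ T, ∀ k, 0 ≤ clockVal ω k := by
    intro ω hω k
    apply List.sum_nonneg
    intro x hx
    simp only [List.mem_map] at hx
    obtain ⟨p, hp, rfl⟩ := hx
    exact hpos ω hω p (List.drop_subset k ω hp)
  -- reflexivity of the region relation on nonnegative reals
  have region_refl : ∀ x : ℝ, 0 ≤ x → SameRegion κ x x := by
    intro x hx
    by_cases hκ : (κ : ℝ) < x
    · exact ⟨Set.Ioi (κ : ℝ), Or.inr (Or.inr rfl), hκ, hκ⟩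
    · push_neg at hκ
      set n : ℕ := ⌊x⌋.toNat with hn
      have hfl : (0 : ℤ) ≤ ⌊x⌋ := Int.floor_nonneg.mpr hx
      have hcast : (n : ℝ) = ((⌊x⌋ : ℤ) : ℝ) := by
        rw [hn]
        exact_mod_cast congrArg (fun z : ℤ => (z : ℝ)) (Int.toNat_of_nonneg hfl)
      have hnx : (n : ℝ) ≤ x := by rw [hcast]; exact Int.floor_le x
      have hxn1 : x < (n : ℝ) + 1 := by rw [hcast]; exact Int.lt_floor_add_one x
      have hnκ : n ≤ κ := by exact_mod_cast hnx.trans hκ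
      by_cases hxeq : x = (n : ℝ)
      · exact ⟨Set.Icc (n : ℝ) n, Or.inl ⟨n, hnκ, rfl⟩, by simp [hxeq], by simp [hxeq]⟩
      · have hlt : (n : ℝ) < x := lt_of_le_of_ne hnx (fun h => hxeq h.symm)
        have hnκ' : n < κ := by
          rcases lt_or_eq_of_le hnκ with h | h
          · exact h
          · exfalso; rw [h] at hlt; linarith
        exact ⟨Set.Ioo (n : ℝ) ((n : ℝ) + 1), Or.inr (Or.inl ⟨n, hnκ', rfl⟩),
          ⟨hlt, hxn1⟩, ⟨hlt, hxn1⟩⟩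
  -- rows with equal locations are equivalent (contrapositive of C₁)
  have equiv_of_eq : ∀ ω₁ ∈ T, ∀ ω₂ ∈ T, ∀ i j, lastResetAssign bvar ω₁ i →
      lastResetAssign bvar ω₂ j → qvar ω₁ = qvar ω₂ → rowsEquiv MQ E ω₁ ω₂ i j := by
    intro ω₁ h₁ ω₂ h₂ i j hi hj hq
    by_contra hcon
    exact hC1 ω₁ h₁ ω₂ h₂ i j hi hj hcon hq
  -- rows with equal locations have equal membership results
  have MQeq : ∀ ω₁ ∈ T, ∀ ω₂ ∈ T, qvar ω₁ = qvar ω₂ → MQ ω₁ = MQ ω₂ := by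
    intro ω₁ h₁ ω₂ h₂ hq
    obtain ⟨i, hi⟩ := lr_ex ω₁
    obtain ⟨j, hj⟩ := lr_ex ω₂
    have := equiv_of_eq ω₁ h₁ ω₂ h₂ i j hi hj hq [] hεE
    simpa [align1] using this
  -- the transition relation
  set Δ : Set (ℕ × A × Set ℝ × Bool × ℕ) :=
    {x | ∃ ω σ t i, ω ∈ T ∧ ω ++ [(σ, t)] ∈ T ∧ 0 ≤ t ∧ lastResetAssign bvar ω i ∧
      x = (qvar ω, σ, ({clockVal ω i + t} : Set ℝ), bvar (ω ++ [(σ, t)]),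
        qvar (ω ++ [(σ, t)]))} with hΔ
  -- forcing: any enabled transition agrees with the table's extension data
  have force : ∀ q a φ b q', (q, a, φ, b, q') ∈ Δ →
      ∀ ω, ω ∈ T → ∀ i t, lastResetAssign bvar ω i → qvar ω = q → 0 ≤ t →
      ω ++ [(a, t)] ∈ T → clockVal ω i + t ∈ φ →
      φ = {clockVal ω i + t} ∧ b = bvar (ω ++ [(a, t)]) ∧ q' = qvar (ω ++ [(a, t)]) := by
    intro q a φ b q' hmem ω hω i t hlr hq ht hextrow hin
    obtain ⟨ω', σ, t', i', hω', hex', ht', hlr', heq⟩ := hmem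
    obtain ⟨hq1, hq2, hq3, hq4, hq5⟩ : q = qvar ω' ∧ a = σ ∧ φ = {clockVal ω' i' + t'} ∧
        b = bvar (ω' ++ [(σ, t')]) ∧ q' = qvar (ω' ++ [(σ, t')]) := by
      simpa [Prod.ext_iff] using heq
    subst hq2
    rw [hq3] at hin
    have hx : clockVal ω i + t = clockVal ω' i' + t' := Set.mem_singleton_iff.mp hin
    have hequiv : rowsEquiv MQ E ω' ω i' i :=
      equiv_of_eq ω' hω' ω hω i' i hlr' hlr (by rw [← hq1, hq])
    have hreg : SameRegion κ (clockVal ω' i' + t') (clockVal ω i + t) := by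
      rw [← hx]
      exact region_refl _ (add_nonneg (clock_nonneg ω hω i) ht)
    have hc := hC2 ω' hω' ω hω a t' t hex' hextrow i' i hlr' hlr hequiv hreg
      (by rw [← hq1, hq])
    exact ⟨by rw [hq3, hx], by rw [hq4, hc.1], by rw [hq5, hc.2]⟩
  -- extending the last reset along a one-step extension
  have lr_ext : ∀ (ω₀ : List (A × ℝ)) (a : A) (t : ℝ) (i₀ : ℕ),
      lastResetAssign bvar ω₀ i₀ →
      ∃ i, lastResetAssign bvar (ω₀ ++ [(a, t)]) i ∧
        clockVal (ω₀ ++ [(a, t)]) i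
          = if bvar (ω₀ ++ [(a, t)]) then 0 else clockVal ω₀ i₀ + t := by
    intro ω₀ a t i₀ hlr
    cases hb : bvar (ω₀ ++ [(a, t)]) with
    | true =>
        refine ⟨(ω₀ ++ [(a, t)]).length, ⟨le_refl _, ?_, ?_⟩, ?_⟩
        · rw [List.take_length]; exact hb
        · intro j hj hj2; omega
        · simp [clockVal, List.drop_length, hb]
    | false =>
        have hi₀ : i₀ ≤ ω₀.length := hlr.1
        refine ⟨i₀, ⟨?_, ?_, ?_⟩, ?_⟩
        · simp only [List.length_append, List.length_cons, List.length_nil]; omega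
        · rw [List.take_append_of_le_length hi₀]; exact hlr.2.1
        · intro j hj hj2
          simp only [List.length_append, List.length_cons, List.length_nil] at hj2
          rcases Nat.lt_or_ge j (ω₀.length + 1) with h | h
          · rw [List.take_append_of_le_length (by omega)]
            exact hlr.2.2 j hj (by omega)
          · have hj3 : j = ω₀.length + 1 := by omega
            have htake : (ω₀ ++ [(a, t)]).take j = ω₀ ++ [(a, t)] := by
              apply List.take_of_length_le; simp [hj3]
            rw [htake]; exact hb
        · simp only [hb, Bool.false_eq_true, if_false]
          rw [clockVal, clockVal, List.drop_append_of_le_length hi₀]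
          simp
  -- the main run lemma: existence and uniqueness of runs on rows
  have main : ∀ (n : ℕ) (ω : List (A × ℝ)), ω.length = n → ω ∈ T →
      ∀ i, lastResetAssign bvar ω i →
      (∃ tr, Run Δ (qvar [], 0) ω tr ∧
        endState (qvar [], 0) tr = (qvar ω, clockVal ω i)) ∧
      (∀ tr, Run Δ (qvar [], 0) ω tr →
        endState (qvar [], 0) tr = (qvar ω, clockVal ω i)) := by
    intro n
    induction n with
    | zero =>
        intro ω hlen hω i hlr
        have hωnil : ω = [] := List.length_eq_zero_iff.mp hlen
        subst hωnil
        have hi0 : i = 0 := Nat.le_zero.mp hlr.1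
        subst hi0
        constructor
        · exact ⟨[], Run.nil _, by simp [endState_nil, clockVal]⟩
        · intro tr htr
          cases htr
          simp [endState_nil, clockVal]
    | succ n ih =>
        intro ω hlen hω i hlr
        obtain ⟨ω₀, x, rfl⟩ : ∃ ω₀ x, ω = ω₀ ++ [x] := by
          rcases ω.eq_nil_or_concat with h | ⟨L, b, h⟩
          · rw [h] at hlen; simp at hlen
          · exact ⟨L, b, by simpa using h⟩
        obtain ⟨a, t⟩ := x
        have hω₀ : ω₀ ∈ T := by
          have h := hpc _ hω ω₀.length
          rwa [List.take_append_of_le_length (le_refl _), List.take_length] at h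
        obtain ⟨i₀, hlr₀⟩ := lr_ex ω₀
        have hlen₀ : ω₀.length = n := by
          simp only [List.length_append, List.length_cons, List.length_nil] at hlen; omega
        obtain ⟨⟨tr₀, hrun₀, hend₀⟩, huniq₀⟩ := ih ω₀ hlen₀ hω₀ i₀ hlr₀
        obtain ⟨i', hlr', hclock⟩ := lr_ext ω₀ a t i₀ hlr₀
        have hii : i = i' := lr_uniq _ i i' hlr hlr'
        subst hii
        have ht0 : 0 ≤ t := hpos _ hω (a, t) (by simp)
        have hmemΔ : (qvar ω₀, a, ({clockVal ω₀ i₀ + t} : Set ℝ), bvar (ω₀ ++ [(a, t)]),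
            qvar (ω₀ ++ [(a, t)])) ∈ Δ :=
          ⟨ω₀, a, t, i₀, hω₀, hω, ht0, hlr₀, rfl⟩
        constructor
        · have hrun := Run.snoc hrun₀ (a := a) (t := t)
            (φ := ({clockVal ω₀ i₀ + t} : Set ℝ))
            (b := bvar (ω₀ ++ [(a, t)])) (q' := qvar (ω₀ ++ [(a, t)]))
            (by rw [hend₀]; exact hmemΔ) ht0 (by rw [hend₀]; exact rfl)
          refine ⟨_, hrun, ?_⟩
          rw [endState_concat, hend₀, hclock]
        · intro tr htr
          obtain ⟨tr₀', φ, b, q', htreq, hrun', hmem', ht', hin'⟩ := run_concat_inv htr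
          have hend' := huniq₀ tr₀' hrun'
          rw [hend'] at hmem' hin' htreq
          obtain ⟨hφeq, hbeq, hqeq⟩ :=
            force _ _ _ _ _ hmem' ω₀ hω₀ i₀ t hlr₀ rfl ht0 hω hin'
          subst htreq
          rw [endState_concat, hbeq, hqeq, hclock]
  refine ⟨Δ, {m | ∃ ω ∈ T, qvar ω = m ∧ MQ ω = true}, ?_, ?_, ?_, ?_, ?_⟩
  · -- (1) determinism
    intro q a φ b q' φ' b' q'' h1 h2 hne
    rw [Set.eq_empty_iff_forall_notMem]
    intro x hx
    obtain ⟨⟨hx1, hx2⟩, hx0⟩ := hx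
    obtain ⟨ω₁, σ₁, t₁, i₁, hω₁, hex₁, ht₁, hlr₁, heq₁⟩ := h1
    obtain ⟨ω₂, σ₂, t₂, i₂, hω₂, hex₂, ht₂, hlr₂, heq₂⟩ := h2
    obtain ⟨e11, e12, e13, e14, e15⟩ : q = qvar ω₁ ∧ a = σ₁ ∧ φ = {clockVal ω₁ i₁ + t₁} ∧
        b = bvar (ω₁ ++ [(σ₁, t₁)]) ∧ q' = qvar (ω₁ ++ [(σ₁, t₁)]) := by
      simpa [Prod.ext_iff] using heq₁
    obtain ⟨f11, f12, f13, f14, f15⟩ : q = qvar ω₂ ∧ a = σ₂ ∧ φ' = {clockVal ω₂ i₂ + t₂} ∧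
        b' = bvar (ω₂ ++ [(σ₂, t₂)]) ∧ q'' = qvar (ω₂ ++ [(σ₂, t₂)]) := by
      simpa [Prod.ext_iff] using heq₂
    rw [e13] at hx1
    rw [f13] at hx2
    have hv1 : clockVal ω₁ i₁ + t₁ = x := (Set.mem_singleton_iff.mp hx1).symm
    have hv2 : clockVal ω₂ i₂ + t₂ = x := (Set.mem_singleton_iff.mp hx2).symm
    have hσ : σ₁ = σ₂ := by rw [← e12, ← f12]
    subst hσ
    have hequiv : rowsEquiv MQ E ω₁ ω₂ i₁ i₂ :=
      equiv_of_eq ω₁ hω₁ ω₂ hω₂ i₁ i₂ hlr₁ hlr₂ (by rw [← e11, ← f11])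
    have hreg : SameRegion κ (clockVal ω₁ i₁ + t₁) (clockVal ω₂ i₂ + t₂) := by
      rw [hv1, hv2]; exact region_refl x hx0
    have hc := hC2 ω₁ hω₁ ω₂ hω₂ σ₁ t₁ t₂ hex₁ hex₂ i₁ i₂ hlr₁ hlr₂ hequiv hreg
      (by rw [← e11, ← f11])
    apply hne
    rw [e13, f13, e14, f14, e15, f15, hv1, hv2, hc.1, hc.2]
  · -- location bounds
    intro q a φ b q' h
    obtain ⟨ω, σ, t, i, hω, hex, ht, hlrx, heq⟩ := h
    obtain ⟨e1, _, _, _, e5⟩ : q = qvar ω ∧ a = σ ∧ φ = {clockVal ω i + t} ∧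
        b = bvar (ω ++ [(σ, t)]) ∧ q' = qvar (ω ++ [(σ, t)]) := by
      simpa [Prod.ext_iff] using heq
    exact ⟨by rw [e1]; exact hC3.2 ω hω, by rw [e5]; exact hC3.2 _ hex⟩
  · -- (2) rows reach their assigned locations
    intro ω hω
    obtain ⟨i, hlr⟩ := lr_ex ω
    obtain ⟨⟨tr, hrun, hend⟩, _⟩ := main ω.length ω rfl hω i hlr
    exact ⟨tr, hrun, by rw [hend]⟩
  · -- (3) acceptance agrees with membership
    intro ω hω
    obtain ⟨i, hlr⟩ := lr_ex ω
    obtain ⟨⟨tr, hrun, hend⟩, huniq⟩ := main ω.length ω rfl hω i hlr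
    constructor
    · rintro ⟨tr', hrun', hacc⟩
      rw [huniq tr' hrun'] at hacc
      obtain ⟨ω', hω', hq', hMQ⟩ := hacc
      exact (MQeq ω hω ω' hω' hq'.symm).trans hMQ
    · intro hMQ
      exact ⟨tr, hrun, by rw [hend]; exact ⟨ω, hω, rfl, hMQ⟩⟩
  · -- (4) distinguished rows reach distinct locations
    intro ω₁ hω₁ ω₂ hω₂ i j hlr₁ hlr₂ hne tr₁ tr₂ hrun₁ hrun₂
    have h1 := (main ω₁.length ω₁ rfl hω₁ i hlr₁).2 tr₁ hrun₁
    have h2 := (main ω₂.length ω₂ rfl hω₂ j hlr₂).2 tr₂ hrun₂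
    rw [h1, h2]
    exact hC1 ω₁ hω₁ ω₂ hω₂ i j hlr₁ hlr₂ hne
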